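/- Let 0 < α ≤ 1, X = ℝ, E = {−1, 1}, F(t) = |t|^{1+α}/(1+α), and (f,G) the restriction of (F, F′) to E. Then lip_α(G,E) = 2^{1−α}, and the smallest constant M ≥ 0 such that f(t) + G(t)(x−t) + (M/(1+α))|x−t|^{1+α} ≥ f(s) + G(s)(x−s) for all t, s ∈ E and x ∈ ℝ equals 2/(1 + 1/α)^α; in particular lip_α(G,E) = ((1+α)/(2α))^α · A_{α,co}(f,G,E). -/

import Mathlib

open Set Real

lemma key_lemma (α : ℝ) (hα : 0 < α) (v : ℝ) :
    2 * v - 2 ≤ (2 / (1 + 1 / α) ^ α) / (1 + α) * |v| ^ (1 + α) := by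
  have h1α : (0:ℝ) < 1 + α := by linarith
  have hv0 : (0:ℝ) < 1 + 1/α := by positivity
  have hv0α : (0:ℝ) < (1 + 1/α) ^ α := rpow_pos_of_pos hv0 α
  have hc : (0:ℝ) ≤ (2 / (1 + 1 / α) ^ α) / (1 + α) := by positivity
  rcases le_or_gt v 1 with hv | hv
  · have : (0:ℝ) ≤ (2 / (1 + 1 / α) ^ α) / (1 + α) * |v| ^ (1 + α) := by positivity
    linarith
  · have hvpos : (0:ℝ) < v := by linarith
    set v0 : ℝ := 1 + 1/α with hv0def
    set s : ℝ := v / v0 - 1 with hs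
    have hs1 : (-1:ℝ) ≤ s := by
      have : 0 ≤ v / v0 := by positivity
      simp [hs]; linarith
    have hBer : 1 + (1+α) * s ≤ (1 + s) ^ (1+α) :=
      one_add_mul_self_le_rpow_one_add hs1 (by linarith)
    have hvs : v = v0 * (1 + s) := by
      rw [hs, mul_add, mul_sub, mul_one, mul_div_assoc', mul_div_cancel_left₀ _ hv0.ne']; ring
    have h1s : 0 ≤ 1 + s := by linarith
    have hvrpow : v ^ (1+α) = v0 ^ (1+α) * (1 + s) ^ (1+α) := by
      rw [hvs, mul_rpow (le_of_lt hv0) h1s]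
    have hv0pow : v0 ^ (1+α) = v0 * v0 ^ α := by
      rw [rpow_add hv0, rpow_one]
    have habs : |v| = v := abs_of_pos hvpos
    rw [habs, hvrpow, hv0pow]
    have hstep : (2 / v0 ^ α) / (1 + α) * (v0 * v0 ^ α * (1 + s) ^ (1+α))
        = 2 * v0 / (1+α) * (1 + s)^(1+α) := by
      field_simp
    rw [hstep]
    have h2 : 2 * v0 / (1+α) * (1 + (1+α) * s) ≤ 2 * v0 / (1+α) * (1 + s)^(1+α) := by
      apply mul_le_mul_of_nonneg_left hBer (by positivity)
    refine le_trans ?_ h2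
    have hv0α1 : v0 * α = 1 + α := by
      rw [hv0def, add_mul, one_div, inv_mul_cancel₀ hα.ne']; ring
    have : 2 * v0 / (1+α) * (1 + (1+α) * s) = 2 * v0 / (1+α) + 2 * v0 * s := by
      field_simp
    rw [this]
    have hvs' : v0 * s = v - v0 := by rw [hvs]; ring
    have : 2 * v0 * s = 2 * v - 2 * v0 := by rw [mul_assoc, hvs']; ring
    rw [this]
    have hq : 2 * v0 / (1+α) = 2 * v0 - 2 := by
      field_simp
      nlinarith [hv0α1]
    linarith

theorem stmt_9 (α : ℝ) (hα : 0 < α) (hα1 : α ≤ 1)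
    (F G : ℝ → ℝ)
    (hF : ∀ t, F t = |t| ^ (1 + α) / (1 + α))
    (hG : ∀ t, G t = Real.sign t * |t| ^ α) :
    sSup {r : ℝ | ∃ y ∈ ({-1, 1} : Set ℝ), ∃ z ∈ ({-1, 1} : Set ℝ),
        y ≠ z ∧ r = |G y - G z| / |y - z| ^ α} = 2 ^ (1 - α) ∧
    IsLeast {M : ℝ | 0 ≤ M ∧ ∀ t ∈ ({-1, 1} : Set ℝ), ∀ s ∈ ({-1, 1} : Set ℝ), ∀ x : ℝ,
        F s + G s * (x - s) ≤ F t + G t * (x - t) + M / (1 + α) * |x - t| ^ (1 + α)}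
      (2 / (1 + 1 / α) ^ α) ∧
    (2:ℝ) ^ (1 - α) = ((1 + α) / (2 * α)) ^ α * (2 / (1 + 1 / α) ^ α) := by
  have h1α : (0:ℝ) < 1 + α := by linarith
  have hv0 : (0:ℝ) < 1 + 1/α := by positivity
  have hv0α : (0:ℝ) < (1 + 1/α) ^ α := rpow_pos_of_pos hv0 α
  have hG1 : G 1 = 1 := by rw [hG]; simp [Real.sign_of_pos one_pos]
  have hGm1 : G (-1) = -1 := by
    rw [hG, Real.sign_of_neg (by norm_num)]; simp
  have hF1 : F 1 = 1 / (1 + α) := by rw [hF]; simp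
  have hFm1 : F (-1) = 1 / (1 + α) := by rw [hF]; simp
  have h2sub : (2:ℝ) / 2 ^ α = 2 ^ (1 - α) := by
    rw [Real.rpow_sub two_pos, Real.rpow_one]
  refine ⟨?_, ⟨⟨by positivity, ?_⟩, ?_⟩, ?_⟩
  · -- sSup part
    have hset : {r : ℝ | ∃ y ∈ ({-1, 1} : Set ℝ), ∃ z ∈ ({-1, 1} : Set ℝ),
        y ≠ z ∧ r = |G y - G z| / |y - z| ^ α} = {(2:ℝ) ^ (1 - α)} := by
      ext r
      simp only [mem_setOf_eq, mem_insert_iff, mem_singleton_iff]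
      constructor
      · rintro ⟨y, hy, z, hz, hne, rfl⟩
        rcases hy with rfl | rfl <;> rcases hz with rfl | rfl <;>
          first
            | exact absurd rfl hne
            | (rw [hG1, hGm1, ← h2sub]; norm_num)
      · rintro rfl
        exact ⟨1, Or.inr rfl, -1, Or.inl rfl, by norm_num,
          by rw [hG1, hGm1, ← h2sub]; norm_num⟩
    rw [hset, csSup_singleton]
  · -- membership inequality
    intro t ht s hs x
    have hkey := key_lemma α hα
    simp only [mem_insert_iff, mem_singleton_iff] at ht hs
    rcases ht with rfl | rfl <;> rcases hs with rfl | rfl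
    · have : (0:ℝ) ≤ 2 / (1 + 1/α) ^ α / (1 + α) * |x - (-1)| ^ (1 + α) := by positivity
      linarith
    · -- t = -1, s = 1
      have h := hkey (x + 1)
      have hx : x - (-1) = x + 1 := by ring
      rw [hF1, hFm1, hG1, hGm1, hx]
      linarith
    · -- t = 1, s = -1
      have h := hkey (1 - x)
      have hx : |x - 1| = |1 - x| := abs_sub_comm x 1
      rw [hF1, hFm1, hG1, hGm1, hx]
      linarith
    · have : (0:ℝ) ≤ 2 / (1 + 1/α) ^ α / (1 + α) * |x - 1| ^ (1 + α) := by positivity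
      linarith
  · -- lower bound
    rintro M ⟨hM0, hM⟩
    have h := hM (-1) (by norm_num) 1 (by norm_num) (1/α)
    rw [hF1, hFm1, hG1, hGm1] at h
    have hx : (1:ℝ)/α - (-1) = 1 + 1/α := by ring
    rw [hx, abs_of_pos hv0] at h
    have hv0pow : (1 + 1/α) ^ (1+α) = (1 + 1/α) * (1 + 1/α) ^ α := by
      rw [rpow_add hv0, rpow_one]
    rw [hv0pow] at h
    have hr : M/(1+α) * ((1 + 1/α)*(1 + 1/α)^α) = M * (1 + 1/α)^α / α := by
      field_simp
      ring
    rw [hr] at h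
    rw [div_le_iff₀ hv0α]
    have h2 : 2/α ≤ M * (1 + 1/α)^α / α := by
      have e : 1/(1+α) + -1*(1 + 1/α) + M*(1 + 1/α)^α/α
          - (1/(1+α) + 1*(1/α - 1)) = M*(1 + 1/α)^α/α - 2/α := by ring
      linarith
    have h3 := mul_le_mul_of_nonneg_right h2 hα.le
    rw [div_mul_cancel₀ _ hα.ne', div_mul_cancel₀ _ hα.ne'] at h3
    exact h3
  · -- arithmetic identity
    have hv0eq : 1 + 1/α = (1 + α)/α := by field_simp; ring
    have hsplit : (1 + α)/(2*α) = (1/2) * ((1 + α)/α) := by ring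
    rw [hv0eq, hsplit, Real.mul_rpow (by norm_num) (by positivity)]
    have hvα : (0:ℝ) < ((1 + α)/α) ^ α := rpow_pos_of_pos (by positivity) α
    have hh : (1/2:ℝ)^α * ((1+α)/α)^α * (2/((1+α)/α)^α) = 2 * (1/2)^α := by
      field_simp
    rw [hh]
    have hhalf : (1/2:ℝ)^α = (2^α)⁻¹ := by
      rw [one_div, Real.inv_rpow (by norm_num)]
    rw [hhalf, ← div_eq_mul_inv, h2sub]
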